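/- arXiv:2411.02139 — 3 statements merged into one kernel-verified Lean document; each statement's English description precedes it below -/
import Mathlib

section
/- Let A₁,…,A_m be n×n symmetric PSD matrices and B₁,…,B_m be k×k symmetric PSD matrices. Then λ_min(∑_{i=1}^m A_i ⊗ B_i) ≥ (min_{1≤j≤m} λ_min(A_j)) · λ_min(∑_{i=1}^m B_i). -/
open Matrix Kronecker

section Aux

variable {ι : Type*} [Fintype ι] [DecidableEq ι]

lemma aux_smul_psd {M : Matrix ι ι ℝ} (hM : M.PosSemidef) {c : ℝ} (hc : 0 ≤ c) :
    (c • M).PosSemidef := by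
  rw [posSemidef_iff_dotProduct_mulVec]
  constructor
  · unfold Matrix.IsHermitian
    rw [conjTranspose_smul, hM.1.eq, star_trivial]
  · intro x
    rw [smul_mulVec, dotProduct_smul, smul_eq_mul]
    exact mul_nonneg hc (hM.dotProduct_mulVec_nonneg x)

lemma aux_kron_psd {ι' : Type*} [Fintype ι'] [DecidableEq ι']
    {P : Matrix ι ι ℝ} {Q : Matrix ι' ι' ℝ} (hP : P.PosSemidef) (hQ : Q.PosSemidef) :
    (P ⊗ₖ Q).PosSemidef := by
  exact hP.kronecker hQ

lemma aux_sub_smul_psd {M : Matrix ι ι ℝ} (hM : M.IsHermitian) {c : ℝ}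
    (h : ∀ i, c ≤ hM.eigenvalues i) : (M - c • 1).PosSemidef := by
  have hU : (hM.eigenvectorUnitary : Matrix ι ι ℝ) *
      star (hM.eigenvectorUnitary : Matrix ι ι ℝ) = 1 :=
    mem_unitaryGroup_iff.mp hM.eigenvectorUnitary.2
  have key : M - c • 1 = (hM.eigenvectorUnitary : Matrix ι ι ℝ) *
      diagonal (fun i => hM.eigenvalues i - c) *
      (hM.eigenvectorUnitary : Matrix ι ι ℝ)ᴴ := by
    have hd : diagonal (fun i => hM.eigenvalues i - c) =
        diagonal (RCLike.ofReal ∘ hM.eigenvalues) - c • (1 : Matrix ι ι ℝ) := by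
      ext i j
      by_cases hij : i = j <;> simp [diagonal_apply, Matrix.one_apply, hij]
    rw [hd, mul_sub, sub_mul, ← star_eq_conjTranspose]
    rw [Matrix.mul_smul, mul_one, smul_mul_assoc, hU]
    conv_lhs => rw [hM.spectral_theorem, Unitary.conjStarAlgAut_apply]
  rw [key]
  exact (posSemidef_diagonal_iff.mpr fun i => sub_nonneg.mpr (h i)).mul_mul_conjTranspose_same _

lemma aux_eigenvalues_ge {M : Matrix ι ι ℝ} (hM : M.IsHermitian) {c : ℝ}
    (h : (M - c • 1).PosSemidef) (i : ι) : c ≤ hM.eigenvalues i := by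
  have hv := hM.mulVec_eigenvectorBasis i
  have hnorm : dotProduct (star ⇑(hM.eigenvectorBasis i)) ⇑(hM.eigenvectorBasis i)
      = 1 := by
    have h1 : ‖hM.eigenvectorBasis i‖ = 1 := hM.eigenvectorBasis.orthonormal.1 i
    have h3 : (inner ℝ (hM.eigenvectorBasis i) (hM.eigenvectorBasis i) : ℝ) = 1 := by
      rw [real_inner_self_eq_norm_sq, h1]; norm_num
    rw [← h3, EuclideanSpace.inner_eq_star_dotProduct]
    exact dotProduct_comm _ _
  have h2 := h.dotProduct_mulVec_nonneg ⇑(hM.eigenvectorBasis i)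
  rw [sub_mulVec, smul_mulVec, one_mulVec, hv, dotProduct_sub, dotProduct_smul,
    dotProduct_smul, hnorm] at h2
  simp only [smul_eq_mul, mul_one] at h2
  linarith

lemma aux_sum_psd {α : Type*} (s : Finset α) (f : α → Matrix ι ι ℝ)
    (h : ∀ a ∈ s, (f a).PosSemidef) : (∑ a ∈ s, f a).PosSemidef := by
  classical
  induction s using Finset.induction_on with
  | empty => simpa using Matrix.PosSemidef.zero
  | insert x s hx ih =>
    rw [Finset.sum_insert hx]
    exact (h _ (Finset.mem_insert_self _ _)).add
      (ih fun a ha => h a (Finset.mem_insert_of_mem ha))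

end Aux

/-- Lower bound on the smallest eigenvalue of a sum of Kronecker products of PSD matrices. -/
theorem stmt_2 {m n k : ℕ} (A : Fin m → Matrix (Fin n) (Fin n) ℝ)
    (B : Fin m → Matrix (Fin k) (Fin k) ℝ)
    (hA : ∀ i, (A i).PosSemidef) (hB : ∀ i, (B i).PosSemidef)
    (hS : (∑ i, A i ⊗ₖ B i).IsHermitian) (hBs : (∑ i, B i).IsHermitian) :
    (⨅ j, ⨅ a, (hA j).1.eigenvalues a) * (⨅ b, hBs.eigenvalues b) ≤
      ⨅ c, hS.eigenvalues c := by
  set α := ⨅ j, ⨅ a, (hA j).1.eigenvalues a with hα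
  set β := ⨅ b, hBs.eigenvalues b with hβ
  have hα0 : 0 ≤ α :=
    Real.iInf_nonneg fun j => Real.iInf_nonneg fun a => (hA j).eigenvalues_nonneg a
  rcases isEmpty_or_nonempty (Fin n × Fin k) with hE | hNE
  · rw [Real.iInf_of_isEmpty]
    rcases isEmpty_prod.mp hE with hn | hk
    · have hα' : α = 0 := by
        rw [hα]
        have : ∀ j, (⨅ a, (hA j).1.eigenvalues a) = 0 := fun j => Real.iInf_of_isEmpty _
        simp only [this]
        exact Real.iInf_const_zero
      rw [hα', zero_mul]
    · have hβ' : β = 0 := Real.iInf_of_isEmpty _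
      rw [hβ', mul_zero]
  · -- main case
    have hαle : ∀ j a, α ≤ (hA j).1.eigenvalues a := by
      intro j a
      refine le_trans (ciInf_le (Set.Finite.bddBelow (Set.finite_range _)) j) ?_
      exact ciInf_le (Set.Finite.bddBelow (Set.finite_range _)) a
    have hβle : ∀ b, β ≤ hBs.eigenvalues b := fun b =>
      ciInf_le (Set.Finite.bddBelow (Set.finite_range _)) b
    have key : ((∑ i, A i ⊗ₖ B i) - (α * β) • 1).PosSemidef := by
      have hdecomp : (∑ i, A i ⊗ₖ B i) - (α * β) • 1 =
          (∑ i, (A i - α • 1) ⊗ₖ B i) +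
            (1 : Matrix (Fin n) (Fin n) ℝ) ⊗ₖ (α • ((∑ i, B i) - β • 1)) := by
        ext ⟨x1, x2⟩ ⟨y1, y2⟩
        simp only [Matrix.sub_apply, Matrix.add_apply, Matrix.smul_apply, Matrix.sum_apply,
          kroneckerMap_apply, Matrix.one_apply, Prod.mk.injEq, smul_eq_mul, Finset.sum_apply]
        by_cases h1 : x1 = y1 <;> by_cases h2 : x2 = y2 <;>
          simp [h1, h2, mul_sub, sub_mul, Finset.sum_sub_distrib, Finset.mul_sum,
            Finset.sum_mul] <;> ring
      rw [hdecomp]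
      refine (aux_sum_psd _ _ fun i _ => ?_).add (aux_kron_psd Matrix.PosSemidef.one ?_)
      · exact aux_kron_psd (aux_sub_smul_psd (hA i).1 (hαle i)) (hB i)
      · exact aux_smul_psd (aux_sub_smul_psd hBs hβle) hα0
    exact le_ciInf fun c => aux_eigenvalues_ge hS key c
end

section
/- Let A₁,…,A_m be n×n symmetric PSD matrices and B₁,…,B_m be k×k symmetric PSD matrices. Then λ_max(∑_{i=1}^m A_i ⊗ B_i) ≤ (max_{1≤j≤m} λ_max(A_j)) · λ_max(∑_{i=1}^m B_i). -/
open Matrix Kronecker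

lemma psd_kron {n k : ℕ} {A : Matrix (Fin n) (Fin n) ℝ} {B : Matrix (Fin k) (Fin k) ℝ}
    (hA : A.PosSemidef) (hB : B.PosSemidef) : (A ⊗ₖ B).PosSemidef := by
  exact hA.kronecker hB

lemma psd_smul {n : Type*} [Fintype n] {A : Matrix n n ℝ} (hA : A.PosSemidef) {c : ℝ}
    (hc : 0 ≤ c) : (c • A).PosSemidef := by
  refine posSemidef_iff_dotProduct_mulVec.mpr ⟨?_, ?_⟩
  · show (c • A)ᴴ = c • A
    rw [conjTranspose_smul, hA.1.eq, star_trivial]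
  · intro x
    rw [smul_mulVec, dotProduct_smul, smul_eq_mul]
    exact mul_nonneg hc (hA.dotProduct_mulVec_nonneg x)

lemma smul_one_sub_psd {n : Type*} [Fintype n] [DecidableEq n] {A : Matrix n n ℝ} (hA : A.IsHermitian)
    {α : ℝ} (h : ∀ i, hA.eigenvalues i ≤ α) : (α • 1 - A).PosSemidef := by
  set U : Matrix n n ℝ := (hA.eigenvectorUnitary : Matrix n n ℝ) with hU
  have hUU : U * star U = 1 := (Matrix.mem_unitaryGroup_iff).mp hA.eigenvectorUnitary.2
  have key : α • (1 : Matrix n n ℝ) - A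
      = U * diagonal (fun i => α - hA.eigenvalues i) * Uᴴ := by
    conv_lhs => rw [hA.spectral_theorem, Unitary.conjStarAlgAut_apply]
    rw [← Matrix.star_eq_conjTranspose]
    have h1 : α • (1 : Matrix n n ℝ) = U * (α • 1) * star U := by
      rw [mul_smul_comm, smul_mul_assoc, mul_one, hUU]
    rw [h1, ← hU, ← sub_mul, ← mul_sub]
    congr 1
    congr 1
    ext i j
    by_cases hij : i = j <;>
      simp [hij, diagonal_apply, Matrix.one_apply, RCLike.ofReal_real_eq_id]
  rw [key]
  exact (posSemidef_diagonal_iff.mpr fun i => sub_nonneg.mpr (h i)).mul_mul_conjTranspose_same U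

lemma eig_le {n : Type*} [Fintype n] [DecidableEq n] {M : Matrix n n ℝ} (hM : M.IsHermitian) {γ : ℝ}
    (h : (γ • 1 - M).PosSemidef) (c : n) : hM.eigenvalues c ≤ γ := by
  have hvv : star ⇑(hM.eigenvectorBasis c) ⬝ᵥ ⇑(hM.eigenvectorBasis c) = 1 := by
    have h1 : (inner ℝ (hM.eigenvectorBasis c) (hM.eigenvectorBasis c) : ℝ) = 1 := by
      simpa using orthonormal_iff_ite.mp hM.eigenvectorBasis.orthonormal c c
    rw [← h1, PiLp.inner_apply]
    simp [dotProduct, sq]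
  have heig : hM.eigenvalues c = star ⇑(hM.eigenvectorBasis c) ⬝ᵥ (M *ᵥ ⇑(hM.eigenvectorBasis c)) := by
    simpa using hM.eigenvalues_eq c
  have h2 := h.dotProduct_mulVec_nonneg ⇑(hM.eigenvectorBasis c)
  rw [sub_mulVec, smul_mulVec, one_mulVec, dotProduct_sub, dotProduct_smul, hvv,
    smul_eq_mul, mul_one, ← heig, sub_nonneg] at h2
  exact h2

lemma psd_sum {n : Type*} [Fintype n] {m : ℕ} (f : Fin m → Matrix n n ℝ)
    (hf : ∀ i, (f i).PosSemidef) : (∑ i, f i).PosSemidef := by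
  classical
  refine Finset.sum_induction f _ (fun a b ha hb => ha.add hb) .zero (fun i _ => hf i)

/-- Upper bound on the largest eigenvalue of a sum of Kronecker products of PSD matrices. -/
theorem stmt_3 {m n k : ℕ} (A : Fin m → Matrix (Fin n) (Fin n) ℝ)
    (B : Fin m → Matrix (Fin k) (Fin k) ℝ)
    (hA : ∀ i, (A i).PosSemidef) (hB : ∀ i, (B i).PosSemidef)
    (hS : (∑ i, A i ⊗ₖ B i).IsHermitian) (hBs : (∑ i, B i).IsHermitian) :
    (⨆ c, hS.eigenvalues c) ≤
      (⨆ j, ⨆ a, (hA j).1.eigenvalues a) * (⨆ b, hBs.eigenvalues b) := by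
  set α := ⨆ j, ⨆ a, (hA j).1.eigenvalues a with hαdef
  set β := ⨆ b, hBs.eigenvalues b with hβdef
  have hBsum : (∑ i, B i).PosSemidef := psd_sum B hB
  have hα0 : 0 ≤ α := Real.iSup_nonneg fun j =>
    Real.iSup_nonneg fun a => (hA j).eigenvalues_nonneg a
  have hβ0 : 0 ≤ β := Real.iSup_nonneg fun b => hBsum.eigenvalues_nonneg b
  cases isEmpty_or_nonempty (Fin n × Fin k) with
  | inl h =>
    rw [Real.iSup_of_isEmpty]
    exact mul_nonneg hα0 hβ0
  | inr h =>
    apply ciSup_le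
    intro c
    apply eig_le hS
    have hsum1 : (1 : Matrix (Fin n) (Fin n) ℝ) ⊗ₖ (∑ i, B i)
        = ∑ i, (1 : Matrix (Fin n) (Fin n) ℝ) ⊗ₖ B i := by
      ext ⟨x1, x2⟩ ⟨y1, y2⟩
      simp [kroneckerMap_apply, Matrix.sum_apply, Finset.mul_sum]
    have key : (α * β) • (1 : Matrix (Fin n × Fin k) (Fin n × Fin k) ℝ) - ∑ i, A i ⊗ₖ B i
        = α • ((1 : Matrix (Fin n) (Fin n) ℝ) ⊗ₖ (β • 1 - ∑ i, B i))
          + ∑ i, ((α • 1 - A i) ⊗ₖ B i) := by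
      ext ⟨x1, x2⟩ ⟨y1, y2⟩
      simp only [Matrix.sub_apply, Matrix.add_apply, Matrix.smul_apply, Matrix.sum_apply,
        kroneckerMap_apply, Matrix.one_apply, smul_eq_mul, Prod.mk.injEq, Prod.ext_iff]
      by_cases h1 : x1 = y1 <;> by_cases h2 : x2 = y2 <;>
        simp [h1, h2, Finset.sum_sub_distrib, sub_mul, mul_sub, Finset.mul_sum] <;> ring
    rw [key]
    refine PosSemidef.add (psd_smul ?_ hα0) ?_
    · refine psd_kron .one (smul_one_sub_psd hBs fun b => ?_)
      exact le_ciSup (Set.Finite.bddAbove (Set.finite_range _)) b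
    · refine psd_sum _ fun i => psd_kron (smul_one_sub_psd (hA i).1 fun a => ?_) (hB i)
      calc (hA i).1.eigenvalues a ≤ ⨆ a, (hA i).1.eigenvalues a :=
            le_ciSup (Set.Finite.bddAbove (Set.finite_range _)) a
        _ ≤ α := le_ciSup (f := fun j => ⨆ a, (hA j).1.eigenvalues a)
            (Set.Finite.bddAbove (Set.finite_range _)) i
end

section
/- Let W ∈ ℝ^{k×m} and V ∈ ℝ^{m×d} with m ≥ max(d,k), and let Σ ∈ ℝ^{d×d} be symmetric positive definite with PSD square root Σ^{1/2}. Define Ĝ = (W Wᵀ) ⊗ Σ + I_k ⊗ (Σ^{1/2} Vᵀ V Σ^{1/2}). If σ_min(W)² + σ_min(V)² > 0, then the condition number satisfies κ(Ĝ) ≤ κ(Σ) · (σ_max(W)² + σ_max(V)²)/(σ_min(W)² + σ_min(V)²). -/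
open Matrix Kronecker

set_option linter.unusedSectionVars false

section Aux
variable {n : Type*} [Fintype n] [DecidableEq n]

lemma myPSD_smul {A : Matrix n n ℝ} (hA : A.PosSemidef) {c : ℝ} (hc : 0 ≤ c) :
    (c • A).PosSemidef := by
  constructor
  · unfold Matrix.IsHermitian
    rw [conjTranspose_smul, hA.1.eq]
    simp
  · exact (hA.smul hc).2

lemma myPSD_kron {p : Type*} [Fintype p] [DecidableEq p]
    {A : Matrix n n ℝ} {B : Matrix p p ℝ} (hA : A.PosSemidef) (hB : B.PosSemidef) :
    (A ⊗ₖ B).PosSemidef := by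
  exact hA.kronecker hB

lemma myPSD_smul_one_sub {A : Matrix n n ℝ} (hA : A.IsHermitian) {c : ℝ}
    (h : ∀ i, hA.eigenvalues i ≤ c) : (c • (1 : Matrix n n ℝ) - A).PosSemidef := by
  have hst := hA.spectral_theorem
  simp only [Unitary.conjStarAlgAut_apply] at hst
  have h1 : c • (1 : Matrix n n ℝ) =
      (hA.eigenvectorUnitary : Matrix n n ℝ) * (c • 1) *
        (star (hA.eigenvectorUnitary : Matrix n n ℝ)) := by
    rw [mul_smul_comm, mul_one, smul_mul_assoc,
      (Matrix.mem_unitaryGroup_iff).mp hA.eigenvectorUnitary.2]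
  have h2 : c • (1 : Matrix n n ℝ) - A =
      (hA.eigenvectorUnitary : Matrix n n ℝ) * (c • 1 - diagonal (RCLike.ofReal ∘ hA.eigenvalues)) *
        (star (hA.eigenvectorUnitary : Matrix n n ℝ)) := by
    rw [Matrix.mul_sub, Matrix.sub_mul, ← h1, ← hst]
  rw [h2]
  have hd : (c • (1 : Matrix n n ℝ) - diagonal (RCLike.ofReal ∘ hA.eigenvalues)).PosSemidef := by
    have : c • (1 : Matrix n n ℝ) - diagonal (RCLike.ofReal ∘ hA.eigenvalues) =
        diagonal (fun i => c - hA.eigenvalues i) := by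
      rw [smul_one_eq_diagonal, diagonal_sub]
      rfl
    rw [this]
    exact posSemidef_diagonal_iff.mpr fun i => sub_nonneg.mpr (h i)
  have := hd.mul_mul_conjTranspose_same (hA.eigenvectorUnitary : Matrix n n ℝ)
  simpa [Matrix.star_eq_conjTranspose] using this

lemma myPSD_sub_smul_one {A : Matrix n n ℝ} (hA : A.IsHermitian) {c : ℝ}
    (h : ∀ i, c ≤ hA.eigenvalues i) : (A - c • (1 : Matrix n n ℝ)).PosSemidef := by
  have hst := hA.spectral_theorem
  simp only [Unitary.conjStarAlgAut_apply] at hst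
  have h1 : c • (1 : Matrix n n ℝ) =
      (hA.eigenvectorUnitary : Matrix n n ℝ) * (c • 1) *
        (star (hA.eigenvectorUnitary : Matrix n n ℝ)) := by
    rw [mul_smul_comm, mul_one, smul_mul_assoc,
      (Matrix.mem_unitaryGroup_iff).mp hA.eigenvectorUnitary.2]
  have h2 : A - c • (1 : Matrix n n ℝ) =
      (hA.eigenvectorUnitary : Matrix n n ℝ) * (diagonal (RCLike.ofReal ∘ hA.eigenvalues) - c • 1) *
        (star (hA.eigenvectorUnitary : Matrix n n ℝ)) := by
    rw [Matrix.mul_sub, Matrix.sub_mul, ← h1, ← hst]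
  rw [h2]
  have hd : (diagonal (RCLike.ofReal ∘ hA.eigenvalues) - c • (1 : Matrix n n ℝ)).PosSemidef := by
    have : diagonal (RCLike.ofReal ∘ hA.eigenvalues) - c • (1 : Matrix n n ℝ) =
        diagonal (fun i => hA.eigenvalues i - c) := by
      rw [smul_one_eq_diagonal, diagonal_sub]
      rfl
    rw [this]
    exact posSemidef_diagonal_iff.mpr fun i => sub_nonneg.mpr (h i)
  have := hd.mul_mul_conjTranspose_same (hA.eigenvectorUnitary : Matrix n n ℝ)
  simpa [Matrix.star_eq_conjTranspose] using this

lemma myEig_le_of_psd {A : Matrix n n ℝ} (hA : A.IsHermitian) {c : ℝ}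
    (h : (c • (1 : Matrix n n ℝ) - A).PosSemidef) (i : n) : hA.eigenvalues i ≤ c := by
  have h2 := h.dotProduct_mulVec_nonneg (⇑(hA.eigenvectorBasis i))
  have hn : dotProduct (star ⇑(hA.eigenvectorBasis i)) ⇑(hA.eigenvectorBasis i) = 1 := by
    have h3 := hA.eigenvectorBasis.orthonormal.1 i
    have h4 : (inner ℝ (hA.eigenvectorBasis i) (hA.eigenvectorBasis i) : ℝ) = 1 := by
      rw [real_inner_self_eq_norm_sq, h3]; norm_num
    rw [EuclideanSpace.inner_eq_star_dotProduct] at h4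
    rwa [dotProduct_comm]
  rw [sub_mulVec, dotProduct_sub, smul_mulVec, one_mulVec, dotProduct_smul,
    hA.mulVec_eigenvectorBasis, dotProduct_smul, hn] at h2
  simp only [smul_eq_mul, mul_one] at h2
  linarith

lemma myEig_ge_of_psd {A : Matrix n n ℝ} (hA : A.IsHermitian) {c : ℝ}
    (h : (A - c • (1 : Matrix n n ℝ)).PosSemidef) (i : n) : c ≤ hA.eigenvalues i := by
  have h2 := h.dotProduct_mulVec_nonneg (⇑(hA.eigenvectorBasis i))
  have hn : dotProduct (star ⇑(hA.eigenvectorBasis i)) ⇑(hA.eigenvectorBasis i) = 1 := by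
    have h3 := hA.eigenvectorBasis.orthonormal.1 i
    have h4 : (inner ℝ (hA.eigenvectorBasis i) (hA.eigenvectorBasis i) : ℝ) = 1 := by
      rw [real_inner_self_eq_norm_sq, h3]; norm_num
    rw [EuclideanSpace.inner_eq_star_dotProduct] at h4
    rwa [dotProduct_comm]
  rw [sub_mulVec, dotProduct_sub, smul_mulVec, one_mulVec, dotProduct_smul,
    hA.mulVec_eigenvectorBasis, dotProduct_smul, hn] at h2
  simp only [smul_eq_mul, mul_one] at h2
  linarith

lemma mySub_kron {l p q r : Type*} (A B : Matrix l p ℝ) (C : Matrix q r ℝ) :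
    (A - B) ⊗ₖ C = A ⊗ₖ C - B ⊗ₖ C := by
  ext ⟨i, j⟩ ⟨i', j'⟩
  simp [kroneckerMap_apply, sub_mul]

lemma myKron_sub {l p q r : Type*} (A : Matrix l p ℝ) (B C : Matrix q r ℝ) :
    A ⊗ₖ (B - C) = A ⊗ₖ B - A ⊗ₖ C := by
  ext ⟨i, j⟩ ⟨i', j'⟩
  simp [kroneckerMap_apply, mul_sub]

end Aux

/-- Condition number bound for the Gauss–Newton matrix of a one-hidden-layer linear
network `F(x) = W V x` with input covariance `Σ = R * R` (`R = Σ^{1/2}` PSD).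
Here `σ_max(W)² = λ_max(W Wᵀ)`, `σ_min(W)² = λ_min(W Wᵀ)` (valid since `k ≤ m`),
and similarly for `V` via `Vᵀ V` (valid since `d ≤ m`). -/
theorem stmt_6 {k m d : ℕ} (hdm : d ≤ m) (hkm : k ≤ m)
    (W : Matrix (Fin k) (Fin m) ℝ) (V : Matrix (Fin m) (Fin d) ℝ)
    (Sig R : Matrix (Fin d) (Fin d) ℝ) (hSig : Sig.PosDef) (hR : R.PosSemidef) (hRR : R * R = Sig)
    (hWW : (W * Wᵀ).IsHermitian) (hVV : (Vᵀ * V).IsHermitian)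
    (hG : ((W * Wᵀ) ⊗ₖ Sig + (1 : Matrix (Fin k) (Fin k) ℝ) ⊗ₖ (R * (Vᵀ * V) * R)).IsHermitian)
    (hpos : 0 < (⨅ i, hWW.eigenvalues i) + (⨅ i, hVV.eigenvalues i)) :
    (⨆ i, hG.eigenvalues i) / (⨅ i, hG.eigenvalues i) ≤
      ((⨆ i, hSig.1.eigenvalues i) / (⨅ i, hSig.1.eigenvalues i)) *
        (((⨆ i, hWW.eigenvalues i) + (⨆ i, hVV.eigenvalues i)) /
          ((⨅ i, hWW.eigenvalues i) + (⨅ i, hVV.eigenvalues i))) := by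
  classical
  have hWWpsd : (W * Wᵀ).PosSemidef := by
    rw [← conjTranspose_eq_transpose_of_trivial]
    exact posSemidef_self_mul_conjTranspose W
  have hVVpsd : (Vᵀ * V).PosSemidef := by
    rw [← conjTranspose_eq_transpose_of_trivial]
    exact posSemidef_conjTranspose_mul_self V
  have hA0 : ∀ i, 0 ≤ hWW.eigenvalues i := fun i => hWWpsd.eigenvalues_nonneg i
  have hB0 : ∀ i, 0 ≤ hVV.eigenvalues i := fun i => hVVpsd.eigenvalues_nonneg i
  have hS0 : ∀ i, 0 < hSig.1.eigenvalues i := fun i => hSig.eigenvalues_pos i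
  rcases isEmpty_or_nonempty (Fin k × Fin d) with hE | hNE
  · rw [Real.iSup_of_isEmpty, Real.iInf_of_isEmpty, zero_div]
    exact mul_nonneg
      (div_nonneg (Real.iSup_nonneg fun i => (hS0 i).le) (Real.iInf_nonneg fun i => (hS0 i).le))
      (div_nonneg (add_nonneg (Real.iSup_nonneg hA0) (Real.iSup_nonneg hB0))
        (add_nonneg (Real.iInf_nonneg hA0) (Real.iInf_nonneg hB0)))
  · haveI : Nonempty (Fin k) := ⟨hNE.some.1⟩
    haveI : Nonempty (Fin d) := ⟨hNE.some.2⟩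
    set supW := ⨆ i, hWW.eigenvalues i with hsupW
    set infW := ⨅ i, hWW.eigenvalues i with hinfW
    set supV := ⨆ i, hVV.eigenvalues i with hsupV
    set infV := ⨅ i, hVV.eigenvalues i with hinfV
    set supS := ⨆ i, hSig.1.eigenvalues i with hsupS
    set infS := ⨅ i, hSig.1.eigenvalues i with hinfS
    have hWub : ∀ i, hWW.eigenvalues i ≤ supW :=
      fun i => le_ciSup (Set.Finite.bddAbove (Set.finite_range _)) i
    have hWlb : ∀ i, infW ≤ hWW.eigenvalues i :=
      fun i => ciInf_le (Set.Finite.bddBelow (Set.finite_range _)) i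
    have hVub : ∀ i, hVV.eigenvalues i ≤ supV :=
      fun i => le_ciSup (Set.Finite.bddAbove (Set.finite_range _)) i
    have hVlb : ∀ i, infV ≤ hVV.eigenvalues i :=
      fun i => ciInf_le (Set.Finite.bddBelow (Set.finite_range _)) i
    have hSub : ∀ i, hSig.1.eigenvalues i ≤ supS :=
      fun i => le_ciSup (Set.Finite.bddAbove (Set.finite_range _)) i
    have hSlb : ∀ i, infS ≤ hSig.1.eigenvalues i :=
      fun i => ciInf_le (Set.Finite.bddBelow (Set.finite_range _)) i
    have hsupW0 : 0 ≤ supW := Real.iSup_nonneg hA0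
    have hsupV0 : 0 ≤ supV := Real.iSup_nonneg hB0
    have hinfW0 : 0 ≤ infW := Real.iInf_nonneg hA0
    have hinfV0 : 0 ≤ infV := Real.iInf_nonneg hB0
    -- building blocks
    have pW : (supW • (1 : Matrix (Fin k) (Fin k) ℝ) - W * Wᵀ).PosSemidef :=
      myPSD_smul_one_sub hWW hWub
    have qW : (W * Wᵀ - infW • (1 : Matrix (Fin k) (Fin k) ℝ)).PosSemidef :=
      myPSD_sub_smul_one hWW hWlb
    have pV : (supV • (1 : Matrix (Fin d) (Fin d) ℝ) - Vᵀ * V).PosSemidef :=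
      myPSD_smul_one_sub hVV hVub
    have qV : (Vᵀ * V - infV • (1 : Matrix (Fin d) (Fin d) ℝ)).PosSemidef :=
      myPSD_sub_smul_one hVV hVlb
    have pS : (supS • (1 : Matrix (Fin d) (Fin d) ℝ) - Sig).PosSemidef :=
      myPSD_smul_one_sub hSig.1 hSub
    have qS : (Sig - infS • (1 : Matrix (Fin d) (Fin d) ℝ)).PosSemidef :=
      myPSD_sub_smul_one hSig.1 hSlb
    have pVR : (R * (supV • (1 : Matrix (Fin d) (Fin d) ℝ) - Vᵀ * V) * R).PosSemidef := by
      have := pV.mul_mul_conjTranspose_same R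
      rwa [hR.1.eq] at this
    have qVR : (R * (Vᵀ * V - infV • (1 : Matrix (Fin d) (Fin d) ℝ)) * R).PosSemidef := by
      have := qV.mul_mul_conjTranspose_same R
      rwa [hR.1.eq] at this
    have hmid1 : R * (supV • (1 : Matrix (Fin d) (Fin d) ℝ) - Vᵀ * V) * R
        = supV • Sig - R * (Vᵀ * V) * R := by
      rw [Matrix.mul_sub, Matrix.sub_mul, Matrix.mul_smul, mul_one, Matrix.smul_mul, hRR]
    have hmid2 : R * (Vᵀ * V - infV • (1 : Matrix (Fin d) (Fin d) ℝ)) * R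
        = R * (Vᵀ * V) * R - infV • Sig := by
      rw [Matrix.mul_sub, Matrix.sub_mul, Matrix.mul_smul, mul_one, Matrix.smul_mul, hRR]
    -- upper bound
    have upper : ((supS * (supW + supV)) • (1 : Matrix (Fin k × Fin d) (Fin k × Fin d) ℝ) -
        ((W * Wᵀ) ⊗ₖ Sig + (1 : Matrix (Fin k) (Fin k) ℝ) ⊗ₖ (R * (Vᵀ * V) * R))).PosSemidef := by
      have key : (supS * (supW + supV)) • (1 : Matrix (Fin k × Fin d) (Fin k × Fin d) ℝ) -
          ((W * Wᵀ) ⊗ₖ Sig + (1 : Matrix (Fin k) (Fin k) ℝ) ⊗ₖ (R * (Vᵀ * V) * R)) =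
          ((supW • (1 : Matrix (Fin k) (Fin k) ℝ) - W * Wᵀ) ⊗ₖ Sig) +
          ((1 : Matrix (Fin k) (Fin k) ℝ) ⊗ₖ
            (supW • (supS • (1 : Matrix (Fin d) (Fin d) ℝ) - Sig))) +
          ((1 : Matrix (Fin k) (Fin k) ℝ) ⊗ₖ
            (R * (supV • (1 : Matrix (Fin d) (Fin d) ℝ) - Vᵀ * V) * R)) +
          ((1 : Matrix (Fin k) (Fin k) ℝ) ⊗ₖ
            (supV • (supS • (1 : Matrix (Fin d) (Fin d) ℝ) - Sig))) := by
        rw [hmid1]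
        simp only [mySub_kron, myKron_sub, smul_kronecker, kronecker_smul,
          one_kronecker_one]
        module
      rw [key]
      exact (((myPSD_kron pW hSig.posSemidef).add
        (myPSD_kron Matrix.PosSemidef.one (myPSD_smul pS hsupW0))).add
        (myPSD_kron Matrix.PosSemidef.one pVR)).add
        (myPSD_kron Matrix.PosSemidef.one (myPSD_smul pS hsupV0))
    -- lower bound
    have lower : (((W * Wᵀ) ⊗ₖ Sig + (1 : Matrix (Fin k) (Fin k) ℝ) ⊗ₖ (R * (Vᵀ * V) * R)) -
        (infS * (infW + infV)) • (1 : Matrix (Fin k × Fin d) (Fin k × Fin d) ℝ)).PosSemidef := by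
      have key : ((W * Wᵀ) ⊗ₖ Sig + (1 : Matrix (Fin k) (Fin k) ℝ) ⊗ₖ (R * (Vᵀ * V) * R)) -
          (infS * (infW + infV)) • (1 : Matrix (Fin k × Fin d) (Fin k × Fin d) ℝ) =
          ((W * Wᵀ - infW • (1 : Matrix (Fin k) (Fin k) ℝ)) ⊗ₖ Sig) +
          ((1 : Matrix (Fin k) (Fin k) ℝ) ⊗ₖ
            (infW • (Sig - infS • (1 : Matrix (Fin d) (Fin d) ℝ)))) +
          ((1 : Matrix (Fin k) (Fin k) ℝ) ⊗ₖ
            (R * (Vᵀ * V - infV • (1 : Matrix (Fin d) (Fin d) ℝ)) * R)) +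
          ((1 : Matrix (Fin k) (Fin k) ℝ) ⊗ₖ
            (infV • (Sig - infS • (1 : Matrix (Fin d) (Fin d) ℝ)))) := by
        rw [hmid2]
        simp only [mySub_kron, myKron_sub, smul_kronecker, kronecker_smul,
          one_kronecker_one]
        module
      rw [key]
      exact (((myPSD_kron qW hSig.posSemidef).add
        (myPSD_kron Matrix.PosSemidef.one (myPSD_smul qS hinfW0))).add
        (myPSD_kron Matrix.PosSemidef.one qVR)).add
        (myPSD_kron Matrix.PosSemidef.one (myPSD_smul qS hinfV0))
    have hsup : (⨆ i, hG.eigenvalues i) ≤ supS * (supW + supV) :=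
      ciSup_le fun i => myEig_le_of_psd hG upper i
    have hinf : infS * (infW + infV) ≤ ⨅ i, hG.eigenvalues i :=
      le_ciInf fun i => myEig_ge_of_psd hG lower i
    obtain ⟨i0, hi0⟩ := Finite.exists_min hSig.1.eigenvalues
    have hs : 0 < infS := lt_of_lt_of_le (hS0 i0) (le_ciInf hi0)
    have hSs : infS ≤ supS := le_trans (hSlb i0) (hSub i0)
    have hab : 0 < infW + infV := hpos
    have hABab : infW + infV ≤ supW + supV :=
      add_le_add (le_trans (hWlb (Classical.arbitrary _)) (hWub _))
        (le_trans (hVlb (Classical.arbitrary _)) (hVub _))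
    rw [div_mul_div_comm]
    exact div_le_div₀ (mul_nonneg (le_trans hs.le hSs) (le_trans hab.le hABab))
      hsup (mul_pos hs hab) hinf
end
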